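/- arXiv:1702.08684 — 2 statements merged into one kernel-verified Lean document; each statement's English description precedes it below -/
import Mathlib

section
/- In Bool, let S consist of the monomorphisms between countable Boolean algebras. Then every morphism f ∈ Po(S) is a pushout of some monomorphism s between countable Boolean algebras along a monomorphism u; that is, there is a pushout square with left vertical arrow s ∈ S, bottom-left vertex mapped into the domain of f by a monomorphism u, and f as the induced cobase change. -/
universe v u

open CategoryTheory CategoryTheory.Limits

namespace Paper

variable {K : Type u} [Category.{v} K]

/-- A preorder is `κ`-directed if every subset of cardinality `< κ` has an upper bound. -/
def IsCardinalDirected (P : Type v) [Preorder P] (κ : Cardinal.{v}) : Prop :=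
  ∀ S : Set P, Cardinal.mk S < κ → ∃ x : P, ∀ y ∈ S, y ≤ x

/-- An object `A` is `κ`-presentable: its hom-functor preserves `κ`-directed colimits. -/
def IsPresentable (κ : Cardinal.{v}) (A : K) : Prop :=
  ∀ (P : Type v) [Preorder P], IsCardinalDirected P κ →
    ∀ (D : P ⥤ K) (c : Cocone D), IsColimit c →
      (∀ h : A ⟶ c.pt, ∃ (x : P) (g : A ⟶ D.obj x), g ≫ c.ι.app x = h) ∧
      (∀ (x : P) (g g' : A ⟶ D.obj x), g ≫ c.ι.app x = g' ≫ c.ι.app x →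
        ∃ (y : P) (hxy : x ≤ y), g ≫ D.map (homOfLE hxy) = g' ≫ D.map (homOfLE hxy))

/-- `K` is a locally `λ`-presentable category: it is cocomplete and there is a set of
`λ`-presentable objects such that every object is a `λ`-directed colimit of objects
from this set. -/
def IsLocallyPresentable (K : Type u) [Category.{v} K] (lam : Cardinal.{v}) : Prop :=
  HasColimitsOfSize.{v, v} K ∧
  ∃ (ι : Type v) (G : ι → K), (∀ i, IsPresentable lam (G i)) ∧
    ∀ X : K, ∃ (P : Type v) (ip : Preorder P),
      letI := ip
      IsCardinalDirected P lam ∧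
      ∃ (D : P ⥤ K), (∀ p : P, ∃ i : ι, Nonempty (D.obj p ≅ G i)) ∧
        ∃ (c : Cocone D), Nonempty (IsColimit c) ∧ Nonempty (c.pt ≅ X)

/-- There is a representative set of `λ`-presentable objects of cardinality at most `κ`. -/
def PresentablesCardLE (K : Type u) [Category.{v} K] (lam κ : Cardinal.{v}) : Prop :=
  ∃ (ι : Type v) (G : ι → K), Cardinal.mk ι ≤ κ ∧
    ∀ X : K, IsPresentable lam X → ∃ i : ι, Nonempty (X ≅ G i)

/-- `Po X`: the class of all pushouts (cobase changes) of morphisms from `X`. -/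
def Po (X : MorphismProperty K) : MorphismProperty K :=
  fun _ _ f => ∃ (C D : K) (u : C ⟶ _) (s : C ⟶ D) (v : D ⟶ _),
    X s ∧ IsPushout u s f v

/-- `Po_λ X`: pushouts of morphisms from `X` with `λ`-presentable domain and codomain. -/
def PoPres (lam : Cardinal.{v}) (X : MorphismProperty K) : MorphismProperty K :=
  fun _ _ f => ∃ (C D : K) (u : C ⟶ _) (s : C ⟶ D) (v : D ⟶ _),
    X s ∧ IsPresentable lam C ∧ IsPresentable lam D ∧ IsPushout u s f v

/-- Ordinals `≤ γ`, the shape of a transfinite chain of length `γ`. -/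
abbrev ChainIndex (γ : Ordinal.{v}) := {i : Ordinal.{v} // i ≤ γ}

def chainBot (γ : Ordinal.{v}) : ChainIndex γ := ⟨0, zero_le⟩

def chainTop (γ : Ordinal.{v}) : ChainIndex γ := ⟨γ, le_refl γ⟩

/-- The canonical cocone with apex `D x` on the restriction of `D` to a subset `Q`
of elements `≤ x`. -/
@[simps]
def subCocone {P : Type*} [Preorder P] (D : P ⥤ K) (Q : Set P) (x : P)
    (hx : ∀ q : Q, (q : P) ≤ x) :
    Cocone ((Subtype.mono_coe (· ∈ Q)).functor ⋙ D) where
  pt := D.obj x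
  ι :=
    { app := fun q => D.map (homOfLE (hx q))
      naturality := fun q q' h => by
        dsimp
        rw [Category.comp_id]
        exact (D.map_comp _ _).symm }

/-- A chain `F : ChainIndex γ ⥤ K` is smooth if at every limit ordinal `j ≤ γ` the
canonical cocone of the restriction to `{i | i < j}` is a colimit cocone. -/
def IsSmoothChain {γ : Ordinal.{v}} (F : ChainIndex γ ⥤ K) : Prop :=
  ∀ j : ChainIndex γ, Order.IsSuccLimit j.1 →
    Nonempty (IsColimit (subCocone F (Set.Iio j) j (fun q => le_of_lt q.2)))

/-- `f` is a transfinite composition of length `γ` of morphisms from `X`: the composite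
of a smooth chain of length `γ` all of whose successor steps lie in `X`. -/
def IsTransfiniteCompositionOfLength (X : MorphismProperty K) (γ : Ordinal.{v})
    {A B : K} (f : A ⟶ B) : Prop :=
  ∃ F : ChainIndex γ ⥤ K, IsSmoothChain F ∧
    (∀ (i : ChainIndex γ) (hi : i.1 < γ),
      X (F.map (homOfLE (show i ≤ ⟨Order.succ i.1, Order.succ_le_of_lt hi⟩ from
        Order.le_succ i.1)))) ∧
    ∃ (e₀ : F.obj (chainBot γ) ≅ A) (e₁ : F.obj (chainTop γ) ≅ B),
      e₀.inv ≫ F.map (homOfLE (show chainBot γ ≤ chainTop γ from (zero_le : (0 : Ordinal.{v}) ≤ γ))) ≫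
        e₁.hom = f

/-- `Tc X`: the class of transfinite compositions of morphisms from `X`. -/
def Tc (X : MorphismProperty K) : MorphismProperty K :=
  fun _ _ f => ∃ γ : Ordinal.{v}, IsTransfiniteCompositionOfLength X γ f

/-- `κ`-`Tc X`: transfinite compositions of length `< κ`. -/
def TcLT (κ : Cardinal.{v}) (X : MorphismProperty K) : MorphismProperty K :=
  fun _ _ f => ∃ γ : Ordinal.{v}, γ < κ.ord ∧ IsTransfiniteCompositionOfLength X γ f

/-- `cell X = Tc (Po X)`: the class of `X`-cellular morphisms. -/
def Cell (X : MorphismProperty K) : MorphismProperty K := Tc (Po X)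

/-- The morphisms with the right lifting property w.r.t. every morphism of `X`. -/
def Rlp (X : MorphismProperty K) : MorphismProperty K :=
  fun _ _ g => ∀ ⦃A B : K⦄ (f : A ⟶ B), X f → HasLiftingProperty f g

/-- The morphisms with the left lifting property w.r.t. every morphism of `X`. -/
def Llp (X : MorphismProperty K) : MorphismProperty K :=
  fun _ _ f => ∀ ⦃A B : K⦄ (g : A ⟶ B), X g → HasLiftingProperty f g

/-- `cof X`: retracts of `X`-cellular morphisms in comma categories `K\𝒦`,
i.e. retracts in the under-category of the common domain. -/
def Cof (X : MorphismProperty K) : MorphismProperty K :=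
  fun _ _ f => ∃ (C : K) (g : _ ⟶ C), Cell X g ∧
    ∃ (i : _ ⟶ C) (r : C ⟶ _), f ≫ i = g ∧ g ≫ r = f ∧ i ≫ r = 𝟙 _

/-- A (proper) factorization system `(E, M)`: `E` consists of epimorphisms, `M` of
monomorphisms, `M = E^□`, `E = ^□M` and every morphism factors as `m ∘ e`. -/
structure IsFactorizationSystem (E M : MorphismProperty K) : Prop where
  epi : ∀ ⦃A B : K⦄ (f : A ⟶ B), E f → Epi f
  mono : ∀ ⦃A B : K⦄ (f : A ⟶ B), M f → Mono f
  rlp : M = Rlp E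
  llp : E = Llp M
  factor : ∀ ⦃A B : K⦄ (f : A ⟶ B), ∃ (C : K) (e : A ⟶ C) (m : C ⟶ B),
    E e ∧ M m ∧ e ≫ m = f

/-- `M` is special: it is the right class of a factorization system and `cell M = M`. -/
def IsSpecial (M : MorphismProperty K) : Prop :=
  (∃ E : MorphismProperty K, IsFactorizationSystem E M) ∧ Cell M = M

/-- `S ⊆ M` is `λ`-special: (S1) `S ⊆ M_λ`; (S2) `S` contains all isomorphisms between
`λ`-presentable objects; (S3) `λ`-`Tc (Po_λ S) = S`; (S4) the cancellation property. -/
structure IsLambdaSpecial (lam : Cardinal.{v}) (M S : MorphismProperty K) : Prop where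
  le : ∀ ⦃A B : K⦄ (f : A ⟶ B), S f → M f ∧ IsPresentable lam A ∧ IsPresentable lam B
  iso : ∀ ⦃A B : K⦄ (f : A ⟶ B), IsIso f →
    IsPresentable lam A → IsPresentable lam B → S f
  tc : TcLT lam (PoPres lam S) = S
  cancel : ∀ ⦃A B C : K⦄ (f : A ⟶ B) (g : B ⟶ C),
    Po S (f ≫ g) → Po S f → M g → Po S g

/-- `(M, S)` is a `λ`-special pair. -/
def IsSpecialPair (lam : Cardinal.{v}) (M S : MorphismProperty K) : Prop :=
  IsSpecial M ∧ IsLambdaSpecial lam M S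

/-- `X` is `(S,M,κ)`-injective: every `M`-morphism `A → X` with `A` `κ`-presentable
extends along every `Po S`-morphism `A → B` via an `M`-morphism `B → X`. -/
def IsSMInjective (S M : MorphismProperty K) (κ : Cardinal.{v}) (X : K) : Prop :=
  ∀ ⦃A B : K⦄ (f : A ⟶ B), Po S f → IsPresentable κ A →
    ∀ g : A ⟶ X, M g → ∃ h : B ⟶ X, M h ∧ f ≫ h = g

/-- `X` is an `S`-cellular object: the unique morphism from the initial object is
`S`-cellular. -/
def IsCellularObject (S : MorphismProperty K) (X : K) : Prop :=
  ∃ (O : K) (_ : IsInitial O) (f : O ⟶ X), Cell S f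

/-- `X` has size `κ`: its presentability rank is the successor `κ⁺`. -/
def HasSize (κ : Cardinal.{v}) (X : K) : Prop :=
  IsPresentable (Order.succ κ) X ∧
  ∀ μ : Cardinal.{v}, μ.IsRegular → μ < Order.succ κ → ¬ IsPresentable μ X

/-- `M` is closed under directed colimits (in the arrow category). -/
def ClosedUnderDirectedColimits (M : MorphismProperty K) : Prop :=
  ∀ (P : Type v) (ip : Preorder P),
    letI := ip
    ∀ (_ : IsDirected P (· ≤ ·)) (D₁ D₂ : P ⥤ K) (η : D₁ ⟶ D₂)
      (c₁ : Cocone D₁) (c₂ : Cocone D₂) (h₁ : IsColimit c₁) (_ : IsColimit c₂),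
      (∀ p : P, M (η.app p)) →
      M (h₁.desc (Cocone.mk c₂.pt (η ≫ c₂.ι)))

/-- The class of regular monomorphisms of `K`. -/
def regularMonos (K : Type u) [Category.{v} K] : MorphismProperty K :=
  fun _ _ f => Nonempty (RegularMono f)

/-- `K` is coregular: finitely cocomplete, with equalizers of cokernel pairs, and
regular monomorphisms are stable under pushouts. -/
structure IsCoregular (K : Type u) [Category.{v} K] : Prop where
  hasFiniteColimits : HasFiniteColimits K
  hasEqualizersOfCokernelPairs : ∀ ⦃A B : K⦄ (f : A ⟶ B) (P : K) (i₁ i₂ : B ⟶ P),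
    IsPushout f f i₁ i₂ → HasEqualizer i₁ i₂
  pushoutStable : ∀ ⦃A B C D : K⦄ (f : A ⟶ B) (u : A ⟶ C) (g : C ⟶ D) (v : B ⟶ D),
    IsPushout u f g v → Nonempty (RegularMono f) → Nonempty (RegularMono g)

section GoodDiagrams

variable {P : Type v} [PartialOrder P]

/-- A good poset: well-founded with a least element. -/
def IsGoodPoset (P : Type v) [PartialOrder P] : Prop :=
  WellFoundedLT P ∧ ∃ b : P, ∀ x : P, b ≤ x

/-- A `κ`-good poset: good, and every initial segment `↓x` has cardinality `< κ`. -/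
def IsKappaGoodPoset (P : Type v) [PartialOrder P] (κ : Cardinal.{v}) : Prop :=
  IsGoodPoset P ∧ ∀ x : P, Cardinal.mk (Set.Iic x) < κ

/-- `x` is isolated: `{y | y < x}` has a top element (the predecessor of `x`). -/
def IsIsolatedElem (x : P) : Prop := ∃ y : P, y < x ∧ ∀ z : P, z < x → z ≤ y

/-- A diagram over a good poset is smooth: at every limit element `x` (neither least
nor isolated) the canonical cocone on the restriction to `{y | y < x}` is a colimit. -/
def IsSmoothGoodDiagram (D : P ⥤ K) : Prop :=
  ∀ x : P, ¬ (∀ y : P, x ≤ y) → ¬ IsIsolatedElem x →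
    Nonempty (IsColimit (subCocone D (Set.Iio x) x (fun q => le_of_lt q.2)))

/-- The links of `D` (the morphisms `D (x⁻ → x)` for isolated `x`) lie in `X`. -/
def HasLinksIn (D : P ⥤ K) (X : MorphismProperty K) : Prop :=
  ∀ (x y : P) (h : y < x), (∀ z : P, z < x → z ≤ y) → X (D.map (homOfLE h.le))

/-- For every subset `Q` of cardinality `< κ` the colimit of the restriction of `D`
to `Q` is realized as some `D x`, via the morphisms of `D`. -/
def SmallSubcolimitsRealized (D : P ⥤ K) (κ : Cardinal.{v}) : Prop :=
  ∀ Q : Set P, Cardinal.mk Q < κ →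
    ∃ (x : P) (hx : ∀ q : Q, (q : P) ≤ x), Nonempty (IsColimit (subCocone D Q x hx))

end GoodDiagrams

end Paper

open CategoryTheory CategoryTheory.Limits Paper

namespace BoolProof

open CategoryTheory Order Function


variable {α β : Type*} [BooleanAlgebra α] [BooleanAlgebra β]

/-- The hom to `Prop` determined by a prime ideal. -/
def homOfPrime (I : Order.Ideal α) (hI : I.IsPrime) (htop : (⊤ : α) ∉ I) :
    BoundedLatticeHom α Prop where
  toFun x := x ∉ I
  map_sup' x y := by
    change (x ⊔ y ∉ I) = ((x ∉ I) ∨ (y ∉ I))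
    rw [eq_iff_iff]
    constructor
    · intro h
      by_contra hc
      push_neg at hc
      exact h (I.sup_mem hc.1 hc.2)
    · rintro (h | h) hs
      · exact h (I.lower le_sup_left hs)
      · exact h (I.lower le_sup_right hs)
  map_inf' x y := by
    change (x ⊓ y ∉ I) = ((x ∉ I) ∧ (y ∉ I))
    rw [eq_iff_iff]
    constructor
    · exact fun h => ⟨fun hx => h (I.lower inf_le_left hx),
        fun hy => h (I.lower inf_le_right hy)⟩
    · rintro ⟨hx, hy⟩ hxy
      rcases hI.mem_or_mem hxy with h | h
      exacts [hx h, hy h]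
  map_top' := by
    change (⊤ ∉ I) = True
    simp [htop]
  map_bot' := by
    change (⊥ ∉ I) = False
    simp [I.bot_mem]

/-- Separation of `¬ a ≤ b` by a hom to `Prop`. -/
theorem exists_sep {a b : α} (hab : ¬ a ≤ b) :
    ∃ g : BoundedLatticeHom α Prop, g a ∧ ¬ g b := by
  have hdisj : Disjoint ((Order.PFilter.principal a : Order.PFilter α) : Set α)
      ((Order.Ideal.principal b : Order.Ideal α) : Set α) := by
    rw [Set.disjoint_left]
    rintro z hz hz'
    exact hab (le_trans (Order.PFilter.mem_principal.1 hz)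
      (Order.Ideal.mem_principal.1 hz'))
  obtain ⟨J, hJ, hIJ, hJF⟩ := DistribLattice.prime_ideal_of_disjoint_filter_ideal hdisj
  have htop : (⊤ : α) ∉ J :=
    Set.disjoint_left.1 hJF (Order.PFilter.top_mem)
  refine ⟨homOfPrime J hJ htop, ?_, ?_⟩
  · exact Set.disjoint_left.1 hJF (Order.PFilter.mem_principal.2 le_rfl)
  · intro h
    exact h (hIJ (Order.Ideal.mem_principal.2 le_rfl))


theorem le_of_map_le (s : BoundedLatticeHom α β) (hs : Injective s) {x y : α}
    (h : s x ≤ s y) : x ≤ y := by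
  have : s (x ⊓ y) = s x := by rw [map_inf]; exact inf_eq_left.2 h
  exact inf_eq_left.1 (hs this)

theorem apply_inf_iff (g : BoundedLatticeHom α Prop) (c d : α) :
    g (c ⊓ d) ↔ (g c ∧ g d) := by
  rw [show (g (c ⊓ d) : Prop) = ((g c : Prop) ⊓ (g d : Prop)) from map_inf g c d]
  exact Iff.rfl

/-- Every hom to `Prop` extends along an injective hom. -/
theorem exists_extension (s : BoundedLatticeHom α β) (hs : Injective s)
    (g : BoundedLatticeHom α Prop) :
    ∃ h : BoundedLatticeHom β Prop, ∀ a, h (s a) = g a := by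
  classical
  let I : Order.Ideal β :=
    { carrier := {z | ∃ c : α, ¬ g c ∧ z ≤ s c}
      lower' := fun z w hwz ⟨c, hc, hzc⟩ => ⟨c, hc, le_trans hwz hzc⟩
      nonempty' := ⟨⊥, ⊥, by simp [map_bot], bot_le⟩
      directed' := by
        rintro z ⟨c, hc, hzc⟩ w ⟨d, hd, hwd⟩
        refine ⟨s (c ⊔ d), ⟨c ⊔ d, ?_, le_rfl⟩,
          le_trans hzc ((OrderHomClass.mono s) le_sup_left),
          le_trans hwd ((OrderHomClass.mono s) le_sup_right)⟩
        intro h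
        rw [show (g (c ⊔ d) : Prop) = ((g c : Prop) ⊔ (g d : Prop)) from map_sup g c d] at h
        rcases h with h | h
        exacts [hc h, hd h] }
  let F : Order.PFilter β :=
    ⟨{ carrier := {z : βᵒᵈ | ∃ c : α, g c ∧ s c ≤ (OrderDual.ofDual z)}
       lower' := fun z w hwz ⟨c, hc, hzc⟩ => ⟨c, hc, le_trans hzc hwz⟩
       nonempty' := ⟨OrderDual.toDual ⊤, ⊤, by simp [map_top]⟩
       directed' := by
         rintro z ⟨c, hc, hzc⟩ w ⟨d, hd, hwd⟩
         refine ⟨OrderDual.toDual (s (c ⊓ d)), ⟨c ⊓ d,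
           (apply_inf_iff g c d).2 ⟨hc, hd⟩, le_rfl⟩, ?_, ?_⟩
         · show s (c ⊓ d) ≤ OrderDual.ofDual z
           exact le_trans ((OrderHomClass.mono s) inf_le_left) hzc
         · show s (c ⊓ d) ≤ OrderDual.ofDual w
           exact le_trans ((OrderHomClass.mono s) inf_le_right) hwd }⟩
  have hdisj : Disjoint (F : Set β) (I : Set β) := by
    rw [Set.disjoint_left]
    rintro z ⟨c, hc, hcz⟩ ⟨d, hd, hzd⟩
    exact hd ((OrderHomClass.mono g (le_of_map_le s hs (le_trans hcz hzd))) hc)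
  obtain ⟨J, hJ, hIJ, hJF⟩ := DistribLattice.prime_ideal_of_disjoint_filter_ideal hdisj
  have htop : (⊤ : β) ∉ J := Set.disjoint_left.1 hJF (Order.PFilter.top_mem)
  refine ⟨homOfPrime J hJ htop, fun a => ?_⟩
  change (s a ∉ J) = (g a : Prop)
  rw [eq_iff_iff]
  by_cases hga : (g a : Prop)
  · simp only [hga, iff_true]
    exact Set.disjoint_left.1 hJF ⟨a, hga, le_rfl⟩
  · simp only [hga, iff_false, not_not]
    exact hIJ ⟨a, hga, le_rfl⟩

variable {A B Z : BoolAlg.{0}}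

def toHom (f : A ⟶ B) : BoundedLatticeHom A B := f.hom

theorem toHom_comp (f : A ⟶ B) (g : B ⟶ Z) (x : A) :
    toHom (f ≫ g) x = toHom g (toHom f x) := rfl

theorem homExt {f g : A ⟶ B} (h : ∀ x, toHom f x = toHom g x) : f = g :=
  BoolAlg.hom_ext (BoundedLatticeHom.ext h)

/-- The hom from the four-element Boolean algebra picking out `c`. -/
def pairHom {γ : Type*} [BooleanAlgebra γ] (c : γ) : BoundedLatticeHom (Bool × Bool) γ where
  toFun p := (if p.1 then c else ⊥) ⊔ (if p.2 then cᶜ else ⊥)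
  map_sup' p q := by
    rcases p with ⟨p1, p2⟩; rcases q with ⟨q1, q2⟩
    cases p1 <;> cases p2 <;> cases q1 <;> cases q2 <;>
      simp [sup_comm, sup_assoc, sup_left_comm]
  map_inf' p q := by
    rcases p with ⟨p1, p2⟩; rcases q with ⟨q1, q2⟩
    cases p1 <;> cases p2 <;> cases q1 <;> cases q2 <;>
      simp [inf_sup_left, inf_sup_right, inf_compl_eq_bot, compl_inf_eq_bot, sup_compl_eq_top,
        inf_comm]
  map_top' := by simp [Prod.fst_top, Prod.snd_top, sup_compl_eq_top]
  map_bot' := by simp [Prod.fst_bot, Prod.snd_bot]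

theorem injective_of_mono (f : A ⟶ B) (hf : Mono f) : Function.Injective (toHom f) := by
  intro x y hxy
  have h1 : (show (BoolAlg.of (Bool × Bool)) ⟶ A from BoolAlg.ofHom (pairHom x)) ≫ f =
      (show (BoolAlg.of (Bool × Bool)) ⟶ A from BoolAlg.ofHom (pairHom y)) ≫ f := by
    apply homExt
    intro p
    rw [toHom_comp, toHom_comp]
    show toHom f (pairHom x p) = toHom f (pairHom y p)
    rcases p with ⟨p1, p2⟩
    cases p1 <;> cases p2 <;>
      simp [pairHom, map_sup, map_bot, map_compl' (toHom f), hxy]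
  have h2 := (cancel_mono f).1 h1
  have h3 := congrFun (congrArg (fun (g : (BoolAlg.of (Bool × Bool)) ⟶ A) =>
    (toHom g : Bool × Bool → A)) h2) (true, false)
  simpa [pairHom, toHom] using h3
theorem mono_of_injective (f : A ⟶ B) (hf : Function.Injective (toHom f)) : Mono f :=
  ⟨fun g h hgh => homExt fun x => hf (by rw [← toHom_comp, ← toHom_comp, hgh])⟩

theorem pushout_injective {C D : BoolAlg.{0}} (u : C ⟶ A) (s : C ⟶ D) (f : A ⟶ B) (v : D ⟶ B)
    (hP : IsPushout u s f v) (hs : Function.Injective (toHom s)) :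
    Function.Injective (toHom f) := by
  have key : ∀ a b : A, ¬ a ≤ b → toHom f a ≠ toHom f b := by
    intro a b hab hfab
    obtain ⟨g, hga, hgb⟩ := exists_sep hab
    set Zo : BoolAlg.{0} := BoolAlg.of Prop with hZo
    obtain ⟨h, hh⟩ := exists_extension (toHom s) hs (g.comp (toHom u))
    have comm : u ≫ (show A ⟶ Zo from BoolAlg.ofHom g) = s ≫ (show D ⟶ Zo from BoolAlg.ofHom h) := by
      apply homExt; intro c
      rw [toHom_comp, toHom_comp]
      exact (hh c).symm
    set w' := hP.desc (show A ⟶ Zo from BoolAlg.ofHom g) (show D ⟶ Zo from BoolAlg.ofHom h) comm with hw'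
    have h1 : f ≫ w' = (show A ⟶ Zo from BoolAlg.ofHom g) := hP.inl_desc _ _ comm
    have ea : toHom (f ≫ w') a = toHom (show A ⟶ Zo from BoolAlg.ofHom g) a := by rw [h1]
    have eb : toHom (f ≫ w') b = toHom (show A ⟶ Zo from BoolAlg.ofHom g) b := by rw [h1]
    have e : toHom (show A ⟶ Zo from BoolAlg.ofHom g) a = toHom (show A ⟶ Zo from BoolAlg.ofHom g) b := by
      rw [← ea, ← eb, toHom_comp, toHom_comp, hfab]
    exact hgb (show (g b : Prop) from (show (g a : Prop) = g b from e) ▸ hga)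
  intro a b hab
  by_contra hne
  have : ¬ a ≤ b ∨ ¬ b ≤ a := by
    by_contra hc
    push_neg at hc
    exact hne (le_antisymm hc.1 hc.2)
  rcases this with h | h
  exacts [key a b h hab, key b a h hab.symm]

section Range

variable {γ δ : Type} [BooleanAlgebra γ] [BooleanAlgebra δ] (w : BoundedLatticeHom γ δ)

instance rangeMax : Max ↥(Set.range ⇑w) :=
  ⟨fun x y => ⟨↑x ⊔ ↑y, by
    obtain ⟨a, ha⟩ := x.2; obtain ⟨b, hb⟩ := y.2
    exact ⟨a ⊔ b, by rw [map_sup, ha, hb]⟩⟩⟩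

instance rangeMin : Min ↥(Set.range ⇑w) :=
  ⟨fun x y => ⟨↑x ⊓ ↑y, by
    obtain ⟨a, ha⟩ := x.2; obtain ⟨b, hb⟩ := y.2
    exact ⟨a ⊓ b, by rw [map_inf, ha, hb]⟩⟩⟩

instance rangeTop : Top ↥(Set.range ⇑w) := ⟨⟨⊤, ⊤, map_top w⟩⟩

instance rangeBot : Bot ↥(Set.range ⇑w) := ⟨⟨⊥, ⊥, map_bot w⟩⟩

instance rangeCompl : Compl ↥(Set.range ⇑w) :=
  ⟨fun x => ⟨(↑x)ᶜ, by
    obtain ⟨a, ha⟩ := x.2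
    exact ⟨aᶜ, by rw [map_compl', ha]⟩⟩⟩

instance rangeSDiff : SDiff ↥(Set.range ⇑w) :=
  ⟨fun x y => ⟨↑x \ ↑y, by
    obtain ⟨a, ha⟩ := x.2; obtain ⟨b, hb⟩ := y.2
    exact ⟨a \ b, by rw [map_sdiff', ha, hb]⟩⟩⟩

instance rangeHImp : HImp ↥(Set.range ⇑w) :=
  ⟨fun x y => ⟨↑x ⇨ ↑y, by
    obtain ⟨a, ha⟩ := x.2; obtain ⟨b, hb⟩ := y.2
    exact ⟨a ⇨ b, by rw [himp_eq, map_sup, map_compl', ha, hb, ← himp_eq]⟩⟩⟩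

instance rangeBooleanAlgebra : BooleanAlgebra ↥(Set.range ⇑w) :=
  Function.Injective.booleanAlgebra _ Subtype.val_injective Iff.rfl Iff.rfl (fun _ _ => rfl) (fun _ _ => rfl)
    rfl rfl (fun _ => rfl) (fun _ _ => rfl) (fun _ _ => rfl)

/-- The inclusion of the range of `w` into the codomain. -/
def rangeIncl : BoundedLatticeHom ↥(Set.range ⇑w) δ where
  toFun := Subtype.val
  map_sup' _ _ := rfl
  map_inf' _ _ := rfl
  map_top' := rfl
  map_bot' := rfl

/-- The corestriction of `w` onto its range. -/
def corestrict : BoundedLatticeHom γ ↥(Set.range ⇑w) where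
  toFun x := ⟨w x, ⟨x, rfl⟩⟩
  map_sup' a b := Subtype.ext (map_sup w a b)
  map_inf' a b := Subtype.ext (map_inf w a b)
  map_top' := Subtype.ext (map_top w)
  map_bot' := Subtype.ext (map_bot w)

theorem rangeIncl_injective : Function.Injective (rangeIncl w) := Subtype.val_injective

instance rangeCountable [Countable γ] : Countable ↥(Set.range ⇑w) :=
  Function.Surjective.countable Set.rangeFactorization_surjective

end Range

end BoolProof

open BoolProof


/-- in `Bool`, every pushout of a monomorphism between countable Boolean
algebras is a pushout of a monomorphism between countable Boolean algebras along a
monomorphism. -/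
theorem boolAlg_po_along_mono
    {A B : BoolAlg.{0}} (f : A ⟶ B)
    (hf : Po (fun (C D : BoolAlg.{0}) s => Mono s ∧ Countable ↥C ∧ Countable ↥D) f) :
    ∃ (C D : BoolAlg.{0}) (u : C ⟶ A) (s : C ⟶ D) (v : D ⟶ B),
      (Mono s ∧ Countable ↥C ∧ Countable ↥D) ∧ Mono u ∧ IsPushout u s f v := by
  obtain ⟨C, D, u, s, v, ⟨hmono, hCc, hDc⟩, hP⟩ := hf
  have hsinj : Function.Injective (toHom s) := injective_of_mono s hmono
  have hfinj : Function.Injective (toHom f) := pushout_injective u s f v hP hsinj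
  haveI : Countable ↥C := hCc
  haveI : Countable ↥D := hDc
  -- the commutation of the original square, elementwise
  have hw : ∀ c : C, toHom f (toHom u c) = toHom v (toHom s c) := fun c => by
    calc toHom f (toHom u c) = toHom (u ≫ f) c := rfl
      _ = toHom (s ≫ v) c := by rw [hP.w]
      _ = toHom v (toHom s c) := rfl
  let C' : BoolAlg.{0} := BoolAlg.of ↥(Set.range ⇑(toHom u))
  let D' : BoolAlg.{0} := BoolAlg.of ↥(Set.range ⇑(toHom v))
  let u' : C' ⟶ A := BoolAlg.ofHom (rangeIncl (toHom u))
  let v' : D' ⟶ B := BoolAlg.ofHom (rangeIncl (toHom v))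
  have hmem : ∀ x : ↥(Set.range ⇑(toHom u)), toHom f ↑x ∈ Set.range ⇑(toHom v) := by
    rintro ⟨z, c, rfl⟩
    exact ⟨toHom s c, (hw c).symm⟩
  let s'h : BoundedLatticeHom ↥(Set.range ⇑(toHom u)) ↥(Set.range ⇑(toHom v)) :=
    { toFun := fun x => ⟨toHom f ↑x, hmem x⟩
      map_sup' := fun a b => by
        apply Subtype.ext
        show toHom f ((a : ↥A) ⊔ (b : ↥A)) = toHom f a ⊔ toHom f b
        exact map_sup _ _ _
      map_inf' := fun a b => by
        apply Subtype.ext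
        show toHom f ((a : ↥A) ⊓ (b : ↥A)) = toHom f a ⊓ toHom f b
        exact map_inf _ _ _
      map_top' := by
        apply Subtype.ext
        show toHom f (⊤ : ↥A) = (⊤ : ↥B)
        exact map_top _
      map_bot' := by
        apply Subtype.ext
        show toHom f (⊥ : ↥A) = (⊥ : ↥B)
        exact map_bot _ }
  let s' : C' ⟶ D' := BoolAlg.ofHom s'h
  let t : D ⟶ D' := BoolAlg.ofHom (corestrict (toHom v))
  have comm' : u' ≫ f = s' ≫ v' := homExt fun x => rfl
  -- auxiliary commutation for descents
  have comm2 : ∀ (W : BoolAlg.{0}) (inl : A ⟶ W) (inr : D' ⟶ W),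
      u' ≫ inl = s' ≫ inr → u ≫ inl = s ≫ (t ≫ inr) := by
    intro W inl inr hcond
    apply homExt
    intro c
    have e1 : s'h ⟨toHom u c, ⟨c, rfl⟩⟩ = corestrict (toHom v) (toHom s c) :=
      Subtype.ext (hw c)
    calc toHom (u ≫ inl) c = toHom (u' ≫ inl) ⟨toHom u c, ⟨c, rfl⟩⟩ := rfl
      _ = toHom (s' ≫ inr) ⟨toHom u c, ⟨c, rfl⟩⟩ := by rw [hcond]
      _ = toHom inr (s'h ⟨toHom u c, ⟨c, rfl⟩⟩) := rfl
      _ = toHom inr (corestrict (toHom v) (toHom s c)) := by rw [e1]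
      _ = toHom (s ≫ t ≫ inr) c := rfl
  have hcol : Limits.IsColimit (Limits.PushoutCocone.mk f v' comm') := by
    apply Limits.PushoutCocone.IsColimit.mk comm'
      (fun z => hP.desc z.inl (t ≫ z.inr) (comm2 _ z.inl z.inr z.condition))
    · intro z
      exact hP.inl_desc _ _ _
    · intro z
      apply homExt
      rintro ⟨x, d, rfl⟩
      have h2 : v ≫ hP.desc z.inl (t ≫ z.inr) (comm2 _ z.inl z.inr z.condition) = t ≫ z.inr :=
        hP.inr_desc _ _ _
      calc toHom (v' ≫ hP.desc z.inl (t ≫ z.inr) (comm2 _ z.inl z.inr z.condition))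
            ⟨toHom v d, ⟨d, rfl⟩⟩
          = toHom (v ≫ hP.desc z.inl (t ≫ z.inr) (comm2 _ z.inl z.inr z.condition)) d := rfl
        _ = toHom (t ≫ z.inr) d := by rw [h2]
        _ = toHom z.inr ⟨toHom v d, ⟨d, rfl⟩⟩ := rfl
    · intro z m hl hr
      apply hP.hom_ext
      · rw [hP.inl_desc]
        exact hl
      · rw [hP.inr_desc]
        apply homExt
        intro d
        calc toHom (v ≫ m) d = toHom (v' ≫ m) (corestrict (toHom v) d) := rfl
          _ = toHom z.inr (corestrict (toHom v) d) := by rw [hr]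
          _ = toHom (t ≫ z.inr) d := rfl
  have hPO : IsPushout u' s' f v' := IsPushout.of_isColimit hcol
  haveI hu'm : Mono u' := mono_of_injective u' (rangeIncl_injective (toHom u))
  haveI hfm : Mono f := mono_of_injective f hfinj
  haveI : Mono (s' ≫ v') := by
    rw [← comm']
    exact mono_comp u' f
  have hs'm : Mono s' := mono_of_mono s' v'
  exact ⟨C', D', u', s', v', ⟨hs'm, rangeCountable (toHom u), rangeCountable (toHom v)⟩,
    hu'm, hPO⟩
end

section
/- Let K be a locally presentable category and M a special class of morphisms (i.e., M is the right class of a factorization system (E,M) with E epimorphisms and M monomorphisms, and cell(M) = M) which contains all split monomorphisms. Then M is cofibrantly closed: cof(M) = M. -/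
universe v u

open CategoryTheory CategoryTheory.Limits

open CategoryTheory CategoryTheory.Limits Paper

/-- in a locally presentable category, a special class `M` containing all
split monomorphisms is cofibrantly closed: `cof M = M`. -/
theorem special_class_is_cofibrantly_closed
    {K : Type u} [Category.{v} K]
    (hK : ∃ lam : Cardinal.{v}, lam.IsRegular ∧ IsLocallyPresentable K lam)
    (M : MorphismProperty K) (hM : IsSpecial M)
    (hsplit : ∀ ⦃A B : K⦄ (f : A ⟶ B), IsSplitMono f → M f) :
    Cof M = M := by
  obtain ⟨⟨E, hFS⟩, hcell⟩ := hM
  funext A B f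
  ext
  constructor
  · rintro ⟨C, g, hg, i, r, hfi, hgr, hir⟩
    rw [hcell] at hg
    rw [hFS.rlp] at hg ⊢
    intro X Y e he
    have := hg e he
    constructor
    intro u v sq
    have sq' : CommSq u e g (v ≫ i) := ⟨by
      rw [← Category.assoc, ← sq.w, Category.assoc, hfi]⟩
    exact ⟨⟨⟨sq'.lift, sq'.fac_left, by
      have : sq'.lift ≫ g ≫ r = v ≫ i ≫ r := by
        rw [← Category.assoc, sq'.fac_right, Category.assoc]
      simpa [hgr, hir] using this⟩⟩⟩
  · intro hf
    exact ⟨B, f, by rw [hcell]; exact hf, 𝟙 B, 𝟙 B, by simp, by simp, by simp⟩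
end
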